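/- Let X have density f(x) = (1/σ^2) exp(-(x + μ^2)/σ^2) I_0(2√x μ/σ^2) on x ≥ 0 with μ, σ > 0. Then E[√X] = (√π σ/2) exp(-μ^2/(2σ^2)) [(1 + μ^2/σ^2) I_0(μ^2/(2σ^2)) + (μ^2/σ^2) I_1(μ^2/(2σ^2))]. -/

import Mathlib

open Real MeasureTheory

/-- Modified Bessel function of the first kind of order 0 (integral representation). -/
noncomputable def besselI0 (z : ℝ) : ℝ :=
  (1 / Real.pi) * ∫ θ in (0:ℝ)..Real.pi, Real.exp (z * Real.cos θ)

/-- Modified Bessel function of the first kind of order 1 (integral representation). -/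
noncomputable def besselI1 (z : ℝ) : ℝ :=
  (1 / Real.pi) * ∫ θ in (0:ℝ)..Real.pi, Real.exp (z * Real.cos θ) * Real.cos θ

open Set

section Aux

lemma gauss1 {b : ℝ} (hb : 0 < b) : ∫ t : ℝ, t * exp (-b*t^2) = 0 := by
  have h := integral_neg_eq_self (fun t : ℝ => t * exp (-b*t^2)) volume
  simp only [neg_sq, neg_mul, integral_neg] at h
  simp only [neg_mul]
  linarith [h]

lemma ig2 {b : ℝ} (hb : 0 < b) : Integrable (fun t : ℝ => t^2 * exp (-b*t^2)) := by
  have h := integrable_rpow_mul_exp_neg_mul_sq hb (s := 2) (by norm_num)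
  simp only [Real.rpow_two] at h
  exact h

lemma gauss2 {b : ℝ} (hb : 0 < b) :
    ∫ t : ℝ, t^2 * exp (-b*t^2) = Real.sqrt (π/b) / (2*b) := by
  have hIoi : ∫ t in Ioi (0:ℝ), t^2 * exp (-b*t^2)
      = b ^ (-(3:ℝ)/2) * (1/2) * Real.Gamma ((3:ℝ)/2) := by
    have h := integral_rpow_mul_exp_neg_mul_rpow (p := 2) (q := 2) (by norm_num) (by norm_num) hb
    rw [show ((2:ℝ)+1)/2 = (3:ℝ)/2 by norm_num, show (-((2:ℝ)+1))/2 = -(3:ℝ)/2 by norm_num] at h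
    simp only [Real.rpow_two] at h
    exact h
  have hG : Real.Gamma ((3:ℝ)/2) = Real.sqrt π / 2 := by
    rw [show (3:ℝ)/2 = 1/2 + 1 by norm_num, Real.Gamma_add_one (by norm_num),
      Real.Gamma_one_half_eq]
    ring
  have hsplit := intervalIntegral.integral_Iic_add_Ioi (b := (0:ℝ)) (μ := volume)
    (ig2 hb).integrableOn (ig2 hb).integrableOn
  have hneg : (∫ t in Iic (0:ℝ), t^2 * exp (-b*t^2))
      = ∫ t in Ioi (0:ℝ), t^2 * exp (-b*t^2) := by
    rw [show (0:ℝ) = -0 by norm_num, ← integral_comp_neg_Iic]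
    simp
  rw [← hsplit, hneg, hIoi, hG]
  have h32 : b ^ (-(3:ℝ)/2) = b⁻¹ * (Real.sqrt b)⁻¹ := by
    rw [show (-(3:ℝ)/2) = (-1) + (-(1/2)) by norm_num, Real.rpow_add hb, Real.rpow_neg_one,
      Real.rpow_neg hb.le, Real.sqrt_eq_rpow]
  rw [h32, Real.sqrt_div' _ hb.le]
  have hsb : (0:ℝ) < Real.sqrt b := Real.sqrt_pos.mpr hb
  field_simp
  ring

lemma igshift {b : ℝ} (hb : 0 < b) (m : ℝ) :
    Integrable (fun t : ℝ => t^2 * exp (-b*(t-m)^2)) := by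
  have h0 : Integrable (fun s : ℝ => (s+m)^2 * exp (-b*s^2)) := by
    have h1 := ig2 hb
    have h2 := (integrable_mul_exp_neg_mul_sq hb).const_mul (2*m)
    have h3 := (integrable_exp_neg_mul_sq hb).const_mul (m^2)
    refine ((h1.add h2).add h3).congr (Filter.Eventually.of_forall fun s => ?_)
    simp only [Pi.add_apply]
    ring
  have := h0.comp_sub_right m
  refine this.congr (Filter.Eventually.of_forall fun t => ?_)
  simp only [sub_add_cancel]

lemma gauss_shift {b : ℝ} (hb : 0 < b) (m : ℝ) :
    ∫ t : ℝ, t^2 * exp (-b*(t-m)^2) = Real.sqrt (π/b) * (1/(2*b) + m^2) := by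
  have h : (∫ t : ℝ, t^2 * exp (-b*(t-m)^2)) = ∫ s : ℝ, (s+m)^2 * exp (-b*s^2) := by
    rw [← integral_add_right_eq_self (fun t => t^2 * exp (-b*(t-m)^2)) m]
    congr 1; funext s; ring_nf
  have h1 := ig2 hb
  have h2 := (integrable_mul_exp_neg_mul_sq hb).const_mul (2*m)
  have h3 := (integrable_exp_neg_mul_sq hb).const_mul (m^2)
  have hfun : (fun s : ℝ => (s+m)^2 * exp (-b*s^2))
      = fun s : ℝ => s^2*exp (-b*s^2) + (2*m*(s*exp (-b*s^2)) + m^2*exp (-b*s^2)) := by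
    funext s; ring
  have h23 : Integrable (fun s : ℝ => 2*m*(s*exp (-b*s^2)) + m^2*exp (-b*s^2)) volume :=
    h2.add h3
  rw [h, hfun, integral_add h1 h23, integral_add h2 h3, integral_const_mul,
    integral_const_mul, gauss1 hb, gauss2 hb, integral_gaussian]
  ring

lemma gauss_halves {b : ℝ} (hb : 0 < b) (m : ℝ) :
    (∫ t in Ioi (0:ℝ), t^2 * exp (-b*(t-m)^2)) + (∫ t in Ioi (0:ℝ), t^2 * exp (-b*(t+m)^2))
      = Real.sqrt (π/b) * (1/(2*b) + m^2) := by
  have h2 : (∫ t in Ioi (0:ℝ), t^2 * exp (-b*(t+m)^2))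
      = ∫ t in Iic (0:ℝ), t^2 * exp (-b*(t-m)^2) := by
    have h := integral_comp_neg_Ioi (0:ℝ) (fun t => t^2 * exp (-b*(t-m)^2))
    simp only [neg_zero] at h
    rw [← h]
    refine setIntegral_congr_fun measurableSet_Ioi fun t ht => ?_
    ring_nf
  rw [h2, add_comm, intervalIntegral.integral_Iic_add_Ioi (igshift hb m).integrableOn
    (igshift hb m).integrableOn, gauss_shift hb m]

end Aux

section Main
variable {μ σ : ℝ} (hμ : 0 < μ) (hσ : 0 < σ)

/-- completing the square -/
lemma Ksq (hσ : 0 < σ) (c : ℝ) :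
    (∫ t in Ioi (0:ℝ), t^2 * exp (-(t^2+μ^2)/σ^2 + 2*t*μ/σ^2 * c))
      = exp (-(μ^2/σ^2)*(1-c^2)) * ∫ t in Ioi (0:ℝ), t^2 * exp (-(1/σ^2)*(t-μ*c)^2) := by
  rw [← MeasureTheory.integral_const_mul]
  refine setIntegral_congr_fun measurableSet_Ioi fun t ht => ?_
  rw [mul_left_comm, ← Real.exp_add]
  congr 2
  field_simp
  ring

lemma KplusK (hμ : 0 < μ) (hσ : 0 < σ) (θ : ℝ) :
    (∫ t in Ioi (0:ℝ), t^2 * exp (-(t^2+μ^2)/σ^2 + 2*t*μ/σ^2 * Real.cos θ))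
      + (∫ t in Ioi (0:ℝ), t^2 * exp (-(t^2+μ^2)/σ^2 + 2*t*μ/σ^2 * Real.cos (π - θ)))
      = exp (-(μ^2/(2*σ^2)) + μ^2/(2*σ^2) * Real.cos (2*θ))
        * (Real.sqrt π * σ * (σ^2/2 + μ^2/2 + μ^2/2 * Real.cos (2*θ))) := by
  have hb : (0:ℝ) < 1/σ^2 := by positivity
  have h1 := Ksq (μ := μ) hσ (Real.cos θ)
  have h2 := Ksq (μ := μ) hσ (Real.cos (π - θ))
  rw [Real.cos_pi_sub] at h2
  have h2' : (∫ t in Ioi (0:ℝ), t^2 * exp (-(1/σ^2)*(t-μ*(-Real.cos θ))^2))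
      = ∫ t in Ioi (0:ℝ), t^2 * exp (-(1/σ^2)*(t+μ*Real.cos θ)^2) := by
    refine setIntegral_congr_fun measurableSet_Ioi fun t ht => ?_
    ring_nf
  rw [h2'] at h2
  rw [Real.cos_pi_sub]
  rw [h1, h2, neg_sq, ← mul_add, gauss_halves hb (μ * Real.cos θ)]
  have hπb : π / (1/σ^2) = π * σ^2 := by field_simp
  rw [hπb, Real.sqrt_mul pi_pos.le, Real.sqrt_sq hσ.le, Real.cos_two_mul]
  have hexp : (-(μ^2/σ^2)*(1-Real.cos θ^2))
      = -(μ^2/(2*σ^2)) + μ^2/(2*σ^2) * (2 * Real.cos θ^2 - 1) := by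
    field_simp
    ring
  rw [hexp]
  have harith : Real.sqrt π * σ * (1/(2*(1/σ^2)) + (μ*Real.cos θ)^2)
      = Real.sqrt π * σ * (σ^2/2 + μ^2/2 + μ^2/2 * (2*Real.cos θ^2 - 1)) := by
    have : 1/(2*(1/σ^2)) = σ^2/2 := by field_simp
    rw [this]; ring
  rw [harith]

lemma Kcont (hμ : 0 < μ) (hσ : 0 < σ) :
    Continuous (fun θ : ℝ => ∫ t in Ioi (0:ℝ),
      t^2 * exp (-(t^2+μ^2)/σ^2 + 2*t*μ/σ^2 * Real.cos θ)) := by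
  have hb : (0:ℝ) < 1/σ^2 := by positivity
  apply MeasureTheory.continuous_of_dominated
    (bound := fun t => t^2 * exp (-(1/σ^2)*(t-μ)^2))
  · intro θ
    apply Continuous.aestronglyMeasurable
    fun_prop
  · intro θ
    filter_upwards [ae_restrict_mem measurableSet_Ioi] with t ht
    have ht0 : (0:ℝ) ≤ t := le_of_lt ht
    rw [Real.norm_of_nonneg (by positivity)]
    apply mul_le_mul_of_nonneg_left _ (sq_nonneg t)
    apply Real.exp_le_exp.mpr
    have hkey : -(1/σ^2)*(t-μ)^2 = -(t^2+μ^2)/σ^2 + 2*t*μ/σ^2 := by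
      field_simp; ring
    have hc : 2*t*μ/σ^2 * Real.cos θ ≤ 2*t*μ/σ^2 :=
      mul_le_of_le_one_right (by positivity) (Real.cos_le_one θ)
    linarith
  · exact (igshift hb μ).integrableOn
  · filter_upwards with t
    fun_prop

end Main

set_option maxHeartbeats 1000000 in
theorem stmt_11 (μ σ : ℝ) (hμ : 0 < μ) (hσ : 0 < σ) :
    (∫ x in Set.Ioi (0:ℝ),
      Real.sqrt x *
        ((1 / σ^2) * Real.exp (-(x + μ^2) / σ^2) * besselI0 (2 * Real.sqrt x * μ / σ^2)))
    = (Real.sqrt Real.pi * σ / 2) * Real.exp (-μ^2 / (2 * σ^2)) *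
        ((1 + μ^2 / σ^2) * besselI0 (μ^2 / (2 * σ^2)) +
          (μ^2 / σ^2) * besselI1 (μ^2 / (2 * σ^2))) := by
  have hb : (0:ℝ) < 1/σ^2 := by positivity
  set g : ℝ → ℝ → ℝ := fun t θ => t^2 * exp (-(t^2+μ^2)/σ^2 + 2*t*μ/σ^2 * Real.cos θ) with hg_def
  set K : ℝ → ℝ := fun θ => ∫ t in Ioi (0:ℝ), g t θ with hK_def
  set G : ℝ → ℝ := fun φ => exp (-(μ^2/(2*σ^2)) + μ^2/(2*σ^2) * Real.cos φ)
      * (Real.sqrt π * σ * (σ^2/2 + μ^2/2 + μ^2/2 * Real.cos φ)) with hG_def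
  have hGcont : Continuous G := by
    rw [hG_def]; fun_prop
  -- step 1 : substitution x = t^2
  have step1 : (∫ x in Set.Ioi (0:ℝ),
      Real.sqrt x *
        ((1 / σ^2) * Real.exp (-(x + μ^2) / σ^2) * besselI0 (2 * Real.sqrt x * μ / σ^2)))
      = ∫ t in Ioi (0:ℝ), (2/(π*σ^2)) * ∫ θ in Ioc (0:ℝ) π, g t θ := by
    rw [← integral_comp_rpow_Ioi (fun x => Real.sqrt x *
        ((1 / σ^2) * Real.exp (-(x + μ^2) / σ^2) * besselI0 (2 * Real.sqrt x * μ / σ^2)))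
      (two_ne_zero)]
    refine setIntegral_congr_fun measurableSet_Ioi fun t ht => ?_
    have ht0 : (0:ℝ) ≤ t := le_of_lt ht
    simp only [smul_eq_mul, Real.rpow_two, abs_two,
      show (2:ℝ) - 1 = 1 by norm_num, Real.rpow_one, Real.sqrt_sq ht0]
    -- unfold besselI0
    rw [besselI0, intervalIntegral.integral_of_le pi_pos.le]
    have hinner : (∫ θ in Ioc (0:ℝ) π, g t θ)
        = (t^2 * exp (-(t^2+μ^2)/σ^2)) * ∫ θ in Ioc (0:ℝ) π, exp (2*t*μ/σ^2 * Real.cos θ) := by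
      rw [← MeasureTheory.integral_const_mul]
      refine setIntegral_congr_fun measurableSet_Ioc fun θ hθ => ?_
      simp only [hg_def]
      rw [Real.exp_add]
      ring
    rw [hinner]
    have harg : 2 * t * μ / σ ^ 2 = 2*t*μ/σ^2 := rfl
    have hπ : (π:ℝ) ≠ 0 := ne_of_gt pi_pos
    have hσ2 : (σ:ℝ)^2 ≠ 0 := by positivity
    field_simp
  -- Fubini
  have hgmeas : AEStronglyMeasurable (fun p : ℝ × ℝ => g p.1 p.2)
      ((volume.restrict (Ioi (0:ℝ))).prod (volume.restrict (Ioc (0:ℝ) π))) := by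
    apply Continuous.aestronglyMeasurable
    simp only [hg_def]
    fun_prop
  have hbound := igshift hb μ
  have hgint : Integrable (fun p : ℝ × ℝ => g p.1 p.2)
      ((volume.restrict (Ioi (0:ℝ))).prod (volume.restrict (Ioc (0:ℝ) π))) := by
    rw [MeasureTheory.integrable_prod_iff hgmeas]
    constructor
    · filter_upwards with t
      apply Continuous.integrableOn_Ioc
      simp only [hg_def]; fun_prop
    · apply Integrable.mono' ((hbound.integrableOn).const_mul π)
        (hgmeas.norm.integral_prod_right')
      filter_upwards [ae_restrict_mem measurableSet_Ioi] with t ht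
      have ht0 : (0:ℝ) ≤ t := le_of_lt ht
      have hgnn : ∀ θ, 0 ≤ g t θ := fun θ => by simp only [hg_def]; positivity
      have hle : ∀ θ, g t θ ≤ t^2 * exp (-(1/σ^2)*(t-μ)^2) := by
        intro θ
        simp only [hg_def]
        apply mul_le_mul_of_nonneg_left _ (sq_nonneg t)
        apply Real.exp_le_exp.mpr
        have hkey : -(1/σ^2)*(t-μ)^2 = -(t^2+μ^2)/σ^2 + 2*t*μ/σ^2 := by field_simp; ring
        have hc : 2*t*μ/σ^2 * Real.cos θ ≤ 2*t*μ/σ^2 :=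
          mul_le_of_le_one_right (by positivity) (Real.cos_le_one θ)
        linarith
      have hnn2 : (0:ℝ) ≤ ∫ θ in Ioc (0:ℝ) π, ‖g t θ‖ :=
        integral_nonneg fun θ => norm_nonneg _
      rw [Real.norm_of_nonneg hnn2]
      have hcont : Continuous (g t) := by simp only [hg_def]; fun_prop
      calc (∫ θ in Ioc (0:ℝ) π, ‖g t θ‖)
          = ∫ θ in Ioc (0:ℝ) π, g t θ := by
            refine setIntegral_congr_fun measurableSet_Ioc fun θ hθ => ?_
            exact Real.norm_of_nonneg (hgnn θ)
        _ ≤ ∫ θ in Ioc (0:ℝ) π, t^2 * exp (-(1/σ^2)*(t-μ)^2) := by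
            have hfin : volume (Ioc (0:ℝ) π) < ⊤ := by
              rw [Real.volume_Ioc]; exact ENNReal.ofReal_lt_top
            apply setIntegral_mono_on (hcont.integrableOn_Ioc)
              (integrableOn_const hfin.ne) measurableSet_Ioc
            intro θ hθ
            exact hle θ
        _ = π * (t^2 * exp (-(1/σ^2)*(t-μ)^2)) := by
            rw [setIntegral_const, smul_eq_mul, Real.volume_real_Ioc_of_le pi_pos.le, sub_zero]
  have step2 : (∫ t in Ioi (0:ℝ), (2/(π*σ^2)) * ∫ θ in Ioc (0:ℝ) π, g t θ)
      = (2/(π*σ^2)) * ∫ θ in (0:ℝ)..π, K θ := by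
    rw [MeasureTheory.integral_const_mul, intervalIntegral.integral_of_le pi_pos.le]
    congr 1
    exact integral_integral_swap hgint
  -- θ-side computation
  have hKc : Continuous K := Kcont hμ hσ
  have hKK : ∀ θ, K θ + K (π - θ) = G (2*θ) := fun θ => KplusK hμ hσ θ
  have hflip : (∫ θ in (0:ℝ)..π, K (π - θ)) = ∫ θ in (0:ℝ)..π, K θ := by
    rw [intervalIntegral.integral_comp_sub_left K π]
    norm_num
  have hdouble : (2:ℝ) * ∫ θ in (0:ℝ)..π, K θ = ∫ θ in (0:ℝ)..π, G (2*θ) := by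
    have hadd : (∫ θ in (0:ℝ)..π, K θ) + (∫ θ in (0:ℝ)..π, K (π - θ))
        = ∫ θ in (0:ℝ)..π, (K θ + K (π - θ)) :=
      (intervalIntegral.integral_add (hKc.intervalIntegrable _ _)
        ((hKc.comp (continuous_const.sub continuous_id)).intervalIntegrable _ _)).symm
    have : (∫ θ in (0:ℝ)..π, (K θ + K (π - θ))) = ∫ θ in (0:ℝ)..π, G (2*θ) := by
      congr 1; funext θ; exact hKK θ
    rw [two_mul]
    nth_rewrite 2 [← hflip]
    rw [hadd, this]
  have hGhalf : (∫ θ in (0:ℝ)..π, G (2*θ)) = (2:ℝ)⁻¹ * ∫ φ in (0:ℝ)..(2*π), G φ := by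
    rw [intervalIntegral.integral_comp_mul_left G two_ne_zero]
    norm_num
  have hGper : (∫ φ in (0:ℝ)..(2*π), G φ) = 2 * ∫ φ in (0:ℝ)..π, G φ := by
    have hsplit : (∫ φ in (0:ℝ)..π, G φ) + (∫ φ in π..(2*π), G φ)
        = ∫ φ in (0:ℝ)..(2*π), G φ :=
      intervalIntegral.integral_add_adjacent_intervals
        (hGcont.intervalIntegrable _ _) (hGcont.intervalIntegrable _ _)
    have hsym : (∫ φ in π..(2*π), G φ) = ∫ φ in (0:ℝ)..π, G φ := by
      have h := intervalIntegral.integral_comp_sub_left G (2*π) (a := 0) (b := π)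
      rw [show 2*π - π = π by ring, show 2*π - 0 = 2*π by ring] at h
      rw [← h]
      congr 1; funext φ
      simp only [hG_def, Real.cos_two_pi_sub]
    linarith [hsplit, hsym]
  have hKint : (∫ θ in (0:ℝ)..π, K θ) = (1/2) * ∫ φ in (0:ℝ)..π, G φ := by
    have := hdouble
    rw [hGhalf, hGper] at this
    linarith
  -- evaluate ∫ G in terms of Bessel
  have hGeval : (∫ φ in (0:ℝ)..π, G φ)
      = exp (-μ^2/(2*σ^2)) * (Real.sqrt π * σ)
        * ((σ^2/2 + μ^2/2) * (π * besselI0 (μ^2/(2*σ^2)))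
           + μ^2/2 * (π * besselI1 (μ^2/(2*σ^2)))) := by
    have hfun : ∀ φ : ℝ, G φ
        = (exp (-μ^2/(2*σ^2)) * (Real.sqrt π * σ))
          * ((σ^2/2 + μ^2/2) * exp (μ^2/(2*σ^2) * Real.cos φ)
             + μ^2/2 * (exp (μ^2/(2*σ^2) * Real.cos φ) * Real.cos φ)) := by
      intro φ
      simp only [hG_def]
      rw [show (-(μ^2/(2*σ^2)) + μ^2/(2*σ^2) * Real.cos φ)
          = (-μ^2/(2*σ^2)) + μ^2/(2*σ^2) * Real.cos φ by ring, Real.exp_add]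
      ring
    rw [intervalIntegral.integral_congr (g := fun φ =>
      (exp (-μ^2/(2*σ^2)) * (Real.sqrt π * σ))
          * ((σ^2/2 + μ^2/2) * exp (μ^2/(2*σ^2) * Real.cos φ)
             + μ^2/2 * (exp (μ^2/(2*σ^2) * Real.cos φ) * Real.cos φ))) (fun φ _ => hfun φ)]
    rw [intervalIntegral.integral_const_mul,
      intervalIntegral.integral_add
        (((Continuous.intervalIntegrable (by fun_prop) _ _)).const_mul _)
        (((Continuous.intervalIntegrable (by fun_prop) _ _)).const_mul _),
      intervalIntegral.integral_const_mul, intervalIntegral.integral_const_mul]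
    rw [besselI0, besselI1]
    have hπ : (π:ℝ) ≠ 0 := ne_of_gt pi_pos
    field_simp
  rw [step1, step2, hKint, hGeval]
  have hπ : (π:ℝ) ≠ 0 := ne_of_gt pi_pos
  have hσ0 : (σ:ℝ) ≠ 0 := ne_of_gt hσ
  field_simp
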